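/- Let ψ₀,…,ψₙ be real numbers with ψ₀ = ψₙ and ∑_{k=0}^{n-1} ψ_k = 0. Then ∑_{k=0}^{n-1} (ψ_{k+1} − ψ_k)² ≥ 4 sin²(π/n) ∑_{k=0}^{n-1} ψ_k². -/

import Mathlib

open Real Finset
open scoped RealInnerProductSpace

abbrev E2 := EuclideanSpace ℝ (Fin 2)

/-- Rotation by π/2 in the plane. -/
noncomputable def Rot (v : E2) : E2 :=
  (WithLp.equiv 2 (Fin 2 → ℝ)).symm ![-v 1, v 0]

/-- Rotation by angle θ in the plane. -/
noncomputable def RotBy (θ : ℝ) (v : E2) : E2 :=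
  (WithLp.equiv 2 (Fin 2 → ℝ)).symm
    ![Real.cos θ * v 0 - Real.sin θ * v 1, Real.sin θ * v 0 + Real.cos θ * v 1]


noncomputable def ee (n : ℕ) (m : ℤ) : ℂ := Complex.exp (2 * π * Complex.I * m / n)

lemma ee_zero (n : ℕ) : ee n 0 = 1 := by simp [ee]

lemma ee_add (n : ℕ) (a b : ℤ) : ee n (a + b) = ee n a * ee n b := by
  rw [ee, ee, ee, ← Complex.exp_add]
  congr 1
  push_cast
  ring

lemma ee_conj (n : ℕ) (m : ℤ) : (starRingEnd ℂ) (ee n m) = ee n (-m) := by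
  rw [ee, ee, ← Complex.exp_conj]
  congr 1
  have : ((2 : ℂ) * π * Complex.I * m / n) = (((2 * π * m / n : ℝ) : ℂ)) * Complex.I := by
    push_cast; ring
  rw [this, map_mul, Complex.conj_I, Complex.conj_ofReal]
  push_cast
  ring

lemma ee_pow (n : ℕ) (m : ℤ) (j : ℕ) : ee n m ^ j = ee n (m * j) := by
  induction j with
  | zero => simp [ee_zero]
  | succ j ih =>
      rw [pow_succ, ih, ← ee_add]
      congr 1
      push_cast
      ring

lemma ee_int_one (n : ℕ) (hn : 0 < n) (k : ℤ) : ee n ((n : ℤ) * k) = 1 := by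
  rw [ee]
  have hne : (n : ℂ) ≠ 0 := by exact_mod_cast Nat.cast_ne_zero.mpr hn.ne'
  have : (2 : ℂ) * π * Complex.I * ((n : ℤ) * k : ℤ) / n = k * (2 * π * Complex.I) := by
    push_cast
    field_simp
  rw [this, Complex.exp_int_mul_two_pi_mul_I]

lemma ee_ne_one (n : ℕ) (hn : 0 < n) (m : ℤ) (hm : ¬ (n : ℤ) ∣ m) : ee n m ≠ 1 := by
  rw [ee]
  intro hone
  rw [Complex.exp_eq_one_iff] at hone
  obtain ⟨k, hk⟩ := hone
  apply hm
  refine ⟨k, ?_⟩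
  have hne : (n : ℂ) ≠ 0 := by exact_mod_cast Nat.cast_ne_zero.mpr hn.ne'
  have hI : (Complex.I : ℂ) ≠ 0 := Complex.I_ne_zero
  have hπ : (π : ℂ) ≠ 0 := by exact_mod_cast Real.pi_ne_zero
  have : (m : ℂ) = (n : ℂ) * k := by
    field_simp at hk
    have h2 : (2 : ℂ) * π * Complex.I ≠ 0 := by
      simp [hπ, hI]
    apply mul_left_cancel₀ h2
    linear_combination (2 * π * Complex.I) * hk
  exact_mod_cast this

lemma ee_sum (n : ℕ) (hn : 0 < n) (m : ℤ) :
    ∑ j ∈ Finset.range n, ee n (m * j) = if (n : ℤ) ∣ m then (n : ℂ) else 0 := by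
  by_cases h : (n : ℤ) ∣ m
  · obtain ⟨k, rfl⟩ := h
    simp only [if_pos (Dvd.intro k rfl)]
    have : ∀ j ∈ Finset.range n, ee n ((n : ℤ) * k * j) = 1 := by
      intro j _
      rw [mul_assoc]
      exact ee_int_one n hn (k * j)
    rw [Finset.sum_congr rfl this]
    simp
  · rw [if_neg h]
    have h1 : ee n m ≠ 1 := ee_ne_one n hn m h
    have : ∑ j ∈ Finset.range n, ee n (m * j) = ∑ j ∈ Finset.range n, (ee n m) ^ j := by
      refine Finset.sum_congr rfl fun j _ => (ee_pow n m j).symm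
    rw [this, geom_sum_eq h1]
    have : ee n m ^ n = 1 := by
      rw [ee_pow, mul_comm]
      exact ee_int_one n hn m
    rw [this]
    simp



noncomputable def cf (n : ℕ) (ψ : ℕ → ℝ) (j : ℕ) : ℂ :=
  ∑ k ∈ Finset.range n, (ψ k : ℂ) * ee n (j * k)

lemma pick (n : ℕ) (hn : 0 < n) (ψ : ℕ → ℝ) (a : ℕ) :
    ∑ l ∈ Finset.range n, (if (n : ℤ) ∣ ((a : ℤ) - l) then (ψ l : ℂ) else 0)
      = (ψ (a % n) : ℂ) := by
  rw [Finset.sum_eq_single (a % n)]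
  · have h : (n : ℤ) * (a / n : ℕ) + (a % n : ℕ) = a := by exact_mod_cast Nat.div_add_mod a n
    rw [if_pos ⟨((a / n : ℕ) : ℤ), by linarith⟩]
  · intro l hl hne
    have hln : l < n := Finset.mem_range.mp hl
    rw [if_neg]
    rintro ⟨c, hc⟩
    apply hne
    have h1 : (l : ℤ) % n = (a : ℤ) % n := by
      have hl' : (l : ℤ) = a - n * c := by linarith
      rw [hl']
      simp [Int.sub_emod, Int.mul_emod_right]
    have h2 : ((a % n : ℕ) : ℤ) = (a : ℤ) % n := by push_cast; rfl
    have h3 : (l : ℤ) % n = l := Int.emod_eq_of_lt (by positivity) (by exact_mod_cast hln)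
    omega
  · intro h
    exact absurd (Finset.mem_range.mpr (Nat.mod_lt a hn)) h

lemma main_sum (n : ℕ) (hn : 0 < n) (ψ : ℕ → ℝ) (t : ℕ) :
    ∑ j ∈ Finset.range n, ee n (j * t) * (cf n ψ j * (starRingEnd ℂ) (cf n ψ j)) =
      (n : ℂ) * ∑ k ∈ Finset.range n, (ψ k : ℂ) * (ψ ((k + t) % n) : ℂ) := by
  have expand : ∀ j ∈ Finset.range n,
      ee n (j * t) * (cf n ψ j * (starRingEnd ℂ) (cf n ψ j)) =
      ∑ k ∈ Finset.range n, ∑ l ∈ Finset.range n,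
        (ψ k : ℂ) * (ψ l : ℂ) * ee n (((t : ℤ) + k - l) * j) := by
    intro j _
    rw [cf, map_sum, Finset.sum_mul_sum, Finset.mul_sum]
    refine Finset.sum_congr rfl fun k _ => ?_
    rw [Finset.mul_sum]
    refine Finset.sum_congr rfl fun l _ => ?_
    rw [map_mul, ee_conj, Complex.conj_ofReal]
    have h3 : ee n (j * t) * (ee n (j * k) * ee n (-(j * l))) = ee n (((t : ℤ) + k - l) * j) := by
      rw [← ee_add, ← ee_add]
      congr 1
      push_cast
      ring
    calc ee n (j*t) * ((ψ k : ℂ) * ee n (j*k) * ((ψ l : ℂ) * ee n (-(j*l))))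
        = (ψ k : ℂ) * (ψ l : ℂ) * (ee n (j*t) * (ee n (j*k) * ee n (-(j*l)))) := by ring
      _ = _ := by rw [h3]
  rw [Finset.sum_congr rfl expand, Finset.sum_comm]
  rw [Finset.mul_sum]
  refine Finset.sum_congr rfl fun k hk => ?_
  rw [Finset.sum_comm]
  have h4 : ∀ l ∈ Finset.range n,
      ∑ j ∈ Finset.range n, (ψ k : ℂ) * (ψ l : ℂ) * ee n (((t : ℤ) + k - l) * j) =
      (ψ k : ℂ) * ((n : ℂ) * (if (n : ℤ) ∣ (((k + t : ℕ) : ℤ) - l) then (ψ l : ℂ) else 0)) := by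
    intro l _
    have hcast : ((t : ℤ) + k - l) = ((k + t : ℕ) : ℤ) - l := by push_cast; ring
    rw [← Finset.mul_sum, hcast, ee_sum n hn]
    split_ifs <;> ring
  rw [Finset.sum_congr rfl h4, ← Finset.mul_sum, ← Finset.mul_sum, pick n hn ψ (k + t)]
  ring



lemma ee_re (n : ℕ) (m : ℤ) : (ee n m).re = Real.cos (2 * π * m / n) := by
  rw [ee, show (2 * π * Complex.I * m / n : ℂ) = ((2 * π * m / n : ℝ) : ℂ) * Complex.I by
    push_cast; ring, Complex.exp_ofReal_mul_I_re]

lemma cos_bound (n j : ℕ) (h1 : 1 ≤ j) (h2 : 2 * j ≤ n) :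
    Real.cos (2 * π * j / n) ≤ Real.cos (2 * π / n) := by
  have hn2 : 2 ≤ n := by omega
  have hn : (0:ℝ) < n := by exact_mod_cast Nat.lt_of_lt_of_le Nat.zero_lt_two hn2
  have hj : (1:ℝ) ≤ j := by exact_mod_cast h1
  have h2' : 2 * (j:ℝ) ≤ n := by exact_mod_cast h2
  apply Real.cos_le_cos_of_nonneg_of_le_pi
  · positivity
  · rw [div_le_iff₀ hn]
    nlinarith [pi_pos]
  · rw [div_le_div_iff₀ hn hn]
    nlinarith [mul_nonneg (mul_nonneg (by linarith [pi_pos] : (0:ℝ) ≤ 2*π) (by linarith : (0:ℝ) ≤ (j:ℝ) - 1)) hn.le]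

lemma cos_bound' (n j : ℕ) (h1 : 1 ≤ j) (h2 : j ≤ n - 1) (hn : 2 ≤ n) :
    Real.cos (2 * π * j / n) ≤ Real.cos (2 * π / n) := by
  by_cases h : 2 * j ≤ n
  · exact cos_bound n j h1 h
  · have hjn : j ≤ n := by omega
    have hnr : (0:ℝ) < n := by positivity
    have hcast : ((n - j : ℕ) : ℝ) = (n : ℝ) - j := by
      push_cast [Nat.cast_sub hjn]; ring
    have heq : 2 * π * j / n = 2 * π - 2 * π * ((n - j : ℕ) : ℝ) / n := by
      rw [hcast]; field_simp; ring
    rw [heq, Real.cos_two_pi_sub]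
    exact cos_bound n (n - j) (by omega) (by omega)

theorem discrete_wirtinger (n : ℕ) (hn : 1 ≤ n) (ψ : ℕ → ℝ)
    (hper : ψ 0 = ψ n) (hmean : ∑ k ∈ Finset.range n, ψ k = 0) :
    ∑ k ∈ Finset.range n, (ψ (k + 1) - ψ k) ^ 2 ≥
      4 * Real.sin (π / n) ^ 2 * ∑ k ∈ Finset.range n, (ψ k) ^ 2 := by
  have hn0 : 0 < n := hn
  have hnr : (0:ℝ) < n := by exact_mod_cast hn0
  set S0 : ℝ := ∑ k ∈ Finset.range n, (ψ k) ^ 2 with hS0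
  set S1 : ℝ := ∑ k ∈ Finset.range n, ψ k * ψ (k + 1) with hS1
  set Q : ℕ → ℝ := fun j => Complex.normSq (cf n ψ j) with hQ
  -- F3 : cf 0 = 0
  have F3 : cf n ψ 0 = 0 := by
    rw [cf]
    have : ∀ k ∈ Finset.range n, (ψ k : ℂ) * ee n ((0:ℕ) * k) = (ψ k : ℂ) := by
      intro k _
      norm_num [ee_zero]
    rw [Finset.sum_congr rfl this]
    exact_mod_cast congrArg (fun x : ℝ => (x : ℂ)) hmean
  -- F1
  have F1 : ∑ j ∈ Finset.range n, Q j = n * S0 := by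
    have h := main_sum n hn0 ψ 0
    simp only [Nat.cast_zero, mul_zero, ee_zero, one_mul, Complex.mul_conj] at h
    have h2 : ∀ k ∈ Finset.range n, (ψ k : ℂ) * (ψ ((k + 0) % n) : ℂ) = ((ψ k ^ 2 : ℝ) : ℂ) := by
      intro k hk
      rw [Nat.add_zero, Nat.mod_eq_of_lt (Finset.mem_range.mp hk)]
      push_cast; ring
    rw [Finset.sum_congr rfl h2] at h
    exact_mod_cast h
  -- F2
  have F2 : ∑ j ∈ Finset.range n, Real.cos (2 * π * j / n) * Q j = n * S1 := by
    have h := main_sum n hn0 ψ 1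
    simp only [Nat.cast_one, mul_one, Complex.mul_conj] at h
    have h2 : ∀ k ∈ Finset.range n, (ψ k : ℂ) * (ψ ((k + 1) % n) : ℂ)
        = ((ψ k * ψ (k + 1) : ℝ) : ℂ) := by
      intro k hk
      have hk' : k < n := Finset.mem_range.mp hk
      rcases Nat.lt_or_ge (k + 1) n with h' | h'
      · rw [Nat.mod_eq_of_lt h']; push_cast; ring
      · have hkn : k + 1 = n := by omega
        rw [hkn, Nat.mod_self]
        rw [hper, ← hkn]
        push_cast; ring
    rw [Finset.sum_congr rfl h2] at h
    have h3 := congrArg Complex.re h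
    rw [hS1, Finset.mul_sum]
    simpa [Complex.mul_re, ee_re, mul_comm, mul_left_comm, Finset.mul_sum] using h3
  -- key nonneg sum
  have hkey : 0 ≤ ∑ j ∈ Finset.range n, (Real.cos (2 * π / n) - Real.cos (2 * π * j / n)) * Q j := by
    apply Finset.sum_nonneg
    intro j hj
    rcases Nat.eq_zero_or_pos j with rfl | hj1
    · have : Q 0 = 0 := by rw [hQ]; simp [F3]
      simp [this]
    · apply mul_nonneg
      · have := cos_bound' n j hj1 (by have := Finset.mem_range.mp hj; omega)
          (by rcases Nat.lt_or_ge n 2 with h | h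
              · exfalso; have := Finset.mem_range.mp hj; omega
              · exact h)
        linarith
      · exact Complex.normSq_nonneg _
  have hexp : ∑ j ∈ Finset.range n, (Real.cos (2 * π / n) - Real.cos (2 * π * j / n)) * Q j
      = Real.cos (2 * π / n) * (n * S0) - n * S1 := by
    rw [← F1, ← F2, Finset.mul_sum, ← Finset.sum_sub_distrib]
    refine Finset.sum_congr rfl fun j _ => by ring
  have hkey2 : Real.cos (2 * π / n) * S0 - S1 ≥ 0 := by
    rw [hexp] at hkey
    have : 0 ≤ n * (Real.cos (2 * π / n) * S0 - S1) := by nlinarith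
    nlinarith
  -- difference sum
  have hshift : ∑ k ∈ Finset.range n, ψ (k + 1) ^ 2 = S0 := by
    have h1 := Finset.sum_range_succ (fun k => ψ k ^ 2) n
    have h2 := Finset.sum_range_succ' (fun k => ψ k ^ 2) n
    rw [hS0]
    have : ψ n ^ 2 = ψ 0 ^ 2 := by rw [hper]
    linarith
  have hD : ∑ k ∈ Finset.range n, (ψ (k + 1) - ψ k) ^ 2 = 2 * S0 - 2 * S1 := by
    have : ∀ k ∈ Finset.range n, (ψ (k + 1) - ψ k) ^ 2
        = ψ (k + 1) ^ 2 + ψ k ^ 2 - 2 * (ψ k * ψ (k + 1)) := fun k _ => by ring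
    rw [Finset.sum_congr rfl this, Finset.sum_sub_distrib, Finset.sum_add_distrib,
      hshift, ← Finset.mul_sum, ← hS0, ← hS1]
    ring
  have hcos : Real.cos (2 * π / n) = 1 - 2 * Real.sin (π / n) ^ 2 := by
    have h1 := Real.sin_sq_add_cos_sq (π / n)
    have h2 := Real.cos_two_mul (π / n)
    have : (2 : ℝ) * (π / n) = 2 * π / n := by ring
    rw [this] at h2
    linarith
  rw [hD]
  rw [hcos] at hkey2
  nlinarith
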